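/- Let T : H → H satisfy the firm nonexpansiveness inequality in the M-norm: ‖T(z) − T(z̄)‖_M² ≤ ‖z − z̄‖_M² − ‖(I−T)(z) − (I−T)(z̄)‖_M² for all z, z̄, where M ≻ 0 is bounded self-adjoint. Suppose Fix T ≠ ∅ and let z_{n+1} = T(z_n) from any z_0. Then for any z* ∈ Fix T and any N ≥ 1: ‖z_N − z_{N−1}‖_M² ≤ ‖z_0 − z*‖_M²/N, and moreover N·‖z_N − z_{N−1}‖_M² → 0 as N → ∞. -/

import Mathlib

open scoped InnerProductSpace
open Filter


open Finset


private lemma aux_nat_mul_tendsto_zero (d : ℕ → ℝ) (hnn : ∀ n, 0 ≤ d n)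
    (hmono : ∀ n, d (n + 1) ≤ d n)
    (hbd : ∃ C, ∀ N, ∑ k ∈ range N, d k ≤ C) :
    Tendsto (fun n : ℕ => (n : ℝ) * d n) atTop (nhds 0) := by
  obtain ⟨C, hC⟩ := hbd
  have hanti : Antitone d := antitone_nat_of_succ_le hmono
  have hsum : Summable d := summable_of_sum_range_le hnn hC
  have hS : Tendsto (fun N => ∑ k ∈ range N, d k) atTop (nhds (∑' k, d k)) :=
    hsum.hasSum.tendsto_sum_nat
  have hhalf : Tendsto (fun n : ℕ => n / 2) atTop atTop := by
    apply tendsto_atTop_atTop.2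
    intro b; exact ⟨2 * b, fun a ha => Nat.le_div_iff_mul_le (by norm_num) |>.2 (by omega)⟩
  have hS2 : Tendsto (fun n : ℕ => ∑ k ∈ range (n / 2), d k) atTop (nhds (∑' k, d k)) :=
    hS.comp hhalf
  have ht : Tendsto (fun n : ℕ => (∑ k ∈ range n, d k) - ∑ k ∈ range (n / 2), d k)
      atTop (nhds 0) := by simpa using hS.sub hS2
  have hd0 : Tendsto d atTop (nhds 0) := hsum.tendsto_atTop_zero
  have hub : ∀ n : ℕ, (n : ℝ) * d n ≤
      2 * ((∑ k ∈ range n, d k) - ∑ k ∈ range (n / 2), d k) + d n := by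
    intro n
    have hsub : range (n / 2) ⊆ range n := range_subset_range.2 (Nat.div_le_self n 2)
    have hdiff : (∑ k ∈ range n, d k) - ∑ k ∈ range (n / 2), d k
        = ∑ k ∈ range n \ range (n / 2), d k := by
      exact (eq_sub_iff_add_eq.2 (Finset.sum_sdiff hsub)).symm
    have hcard : (range n \ range (n / 2)).card = n - n / 2 := by
      rw [card_sdiff_of_subset hsub, card_range, card_range]
    have hkey : ((n - n / 2 : ℕ) : ℝ) * d n ≤ ∑ k ∈ range n \ range (n / 2), d k := by
      have := Finset.card_nsmul_le_sum (range n \ range (n / 2)) d (d n)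
        (fun k hk => hanti (by simp [Finset.mem_sdiff, mem_range] at hk; omega))
      rw [hcard] at this
      simpa [nsmul_eq_mul] using this
    rw [hdiff]
    have hn : (n : ℝ) ≤ 2 * ((n - n / 2 : ℕ) : ℝ) + 1 := by
      have h : n ≤ 2 * (n - n / 2) + 1 := by omega
      calc (n : ℝ) ≤ ((2 * (n - n / 2) + 1 : ℕ) : ℝ) := Nat.cast_le.2 h
        _ = 2 * ((n - n / 2 : ℕ) : ℝ) + 1 := by push_cast; ring
    calc (n : ℝ) * d n ≤ (2 * ((n - n / 2 : ℕ) : ℝ) + 1) * d n :=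
          mul_le_mul_of_nonneg_right hn (hnn n)
      _ = 2 * (((n - n / 2 : ℕ) : ℝ) * d n) + d n := by ring
      _ ≤ 2 * ∑ k ∈ range n \ range (n / 2), d k + d n := by linarith [hkey]
  have hlb : ∀ n : ℕ, 0 ≤ (n : ℝ) * d n := fun n =>
    mul_nonneg (Nat.cast_nonneg n) (hnn n)
  have hRHS : Tendsto (fun n : ℕ =>
      2 * ((∑ k ∈ range n, d k) - ∑ k ∈ range (n / 2), d k) + d n) atTop (nhds 0) := by
    simpa using (ht.const_mul 2).add hd0
  exact squeeze_zero hlb hub hRHS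


/-- For `T` firmly nonexpansive in the `M`-norm
(`‖Tz − Tz̄‖_M² ≤ ‖z − z̄‖_M² − ‖(I−T)z − (I−T)z̄‖_M²`, `M ≻ 0` self-adjoint) with fixed
point `z*`, the iterates `z_{n+1} = T(z_n)` satisfy
`‖z_N − z_{N−1}‖_M² ≤ ‖z_0 − z*‖_M²/N` for all `N ≥ 1`, and
`N·‖z_N − z_{N−1}‖_M² → 0` as `N → ∞`. -/
theorem stmt10 {E : Type*} [NormedAddCommGroup E] [InnerProductSpace ℝ E] [CompleteSpace E]
    (M : E →L[ℝ] E)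
    (hM_selfadj : ∀ u v : E, ⟪M u, v⟫_ℝ = ⟪u, M v⟫_ℝ)
    (hM_posdef : ∀ u : E, u ≠ 0 → 0 < ⟪u, M u⟫_ℝ)
    (T : E → E)
    (hT : ∀ z zbar : E, ⟪T z - T zbar, M (T z - T zbar)⟫_ℝ ≤
        ⟪z - zbar, M (z - zbar)⟫_ℝ -
          ⟪(z - T z) - (zbar - T zbar), M ((z - T z) - (zbar - T zbar))⟫_ℝ)
    (zstar : E) (hzstar : T zstar = zstar)
    (z : ℕ → E) (hz : ∀ n, z (n + 1) = T (z n)) :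
    (∀ N : ℕ, 1 ≤ N → ⟪z N - z (N - 1), M (z N - z (N - 1))⟫_ℝ ≤
        ⟪z 0 - zstar, M (z 0 - zstar)⟫_ℝ / N) ∧
      Tendsto (fun N : ℕ => (N : ℝ) * ⟪z N - z (N - 1), M (z N - z (N - 1))⟫_ℝ)
        atTop (nhds 0) := by
  set Q : E → ℝ := fun u => ⟪u, M u⟫_ℝ with hQ
  have hQnn : ∀ u, 0 ≤ Q u := by
    intro u
    rcases eq_or_ne u 0 with h | h
    · simp [hQ, h]
    · exact (hM_posdef u h).le
  have hQneg : ∀ u, Q (-u) = Q u := by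
    intro u; simp [hQ, map_neg, inner_neg_neg]
  set d : ℕ → ℝ := fun n => Q (z (n + 1) - z n) with hd
  set e : ℕ → ℝ := fun n => Q (z n - zstar) with he
  have hmono : ∀ n, d (n + 1) ≤ d n := by
    intro n
    have h := hT (z (n + 1)) (z n)
    rw [← hz (n + 1), ← hz n] at h
    have h2 : (0:ℝ) ≤ ⟪z (n+1) - z (n+1+1) - (z n - z (n+1)),
        M (z (n+1) - z (n+1+1) - (z n - z (n+1)))⟫_ℝ := hQnn _
    simp only [hd, hQ]
    linarith
  have hfejer : ∀ n, e (n + 1) + d n ≤ e n := by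
    intro n
    have h := hT (z n) zstar
    rw [hzstar, ← hz n] at h
    have hsimp : (z n - z (n + 1)) - (zstar - zstar) = -(z (n + 1) - z n) := by abel
    rw [hsimp] at h
    have hneg : ⟪-(z (n+1) - z n), M (-(z (n+1) - z n))⟫_ℝ
        = ⟪z (n+1) - z n, M (z (n+1) - z n)⟫_ℝ := by
      rw [map_neg, inner_neg_neg]
    rw [hneg] at h
    simp only [he, hd, hQ]
    linarith
  have hnn : ∀ n, 0 ≤ d n := fun n => hQnn _
  have hsumbd : ∀ N, ∑ k ∈ range N, d k ≤ e 0 := by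
    intro N
    have key : ∀ N, ∑ k ∈ range N, d k + e N ≤ e 0 := by
      intro N
      induction N with
      | zero => simp
      | succ n ih =>
        rw [Finset.sum_range_succ]
        have := hfejer n
        linarith
    have := key N
    linarith [hQnn (z N - zstar)]
  have hanti : Antitone d := antitone_nat_of_succ_le hmono
  have part1 : ∀ N : ℕ, 1 ≤ N → ⟪z N - z (N - 1), M (z N - z (N - 1))⟫_ℝ ≤
      ⟪z 0 - zstar, M (z 0 - zstar)⟫_ℝ / N := by
    intro N hN
    have hid : z N - z (N - 1) = z ((N - 1) + 1) - z (N - 1) := by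
      rw [Nat.sub_add_cancel hN]
    have hNd : ⟪z N - z (N - 1), M (z N - z (N - 1))⟫_ℝ = d (N - 1) := by
      rw [hid]
    rw [hNd, le_div_iff₀ (by exact_mod_cast hN : (0:ℝ) < N)]
    have hsum_ge : (N : ℝ) * d (N - 1) ≤ ∑ k ∈ range N, d k := by
      have : ∀ k ∈ range N, d (N - 1) ≤ d k := fun k hk =>
        hanti (by simp [mem_range] at hk; omega)
      calc (N : ℝ) * d (N - 1) = ∑ _k ∈ range N, d (N - 1) := by
            simp [mul_comm]
        _ ≤ ∑ k ∈ range N, d k := Finset.sum_le_sum this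
    calc d (N - 1) * (N : ℝ) = (N : ℝ) * d (N - 1) := by ring
      _ ≤ ∑ k ∈ range N, d k := hsum_ge
      _ ≤ e 0 := hsumbd N
      _ = ⟪z 0 - zstar, M (z 0 - zstar)⟫_ℝ := rfl
  refine ⟨part1, ?_⟩
  have h1 : Tendsto (fun n : ℕ => (n : ℝ) * d n) atTop (nhds 0) :=
    aux_nat_mul_tendsto_zero d hnn hmono ⟨e 0, hsumbd⟩
  have hd0 : Tendsto d atTop (nhds 0) := by
    have hsum : Summable d := summable_of_sum_range_le hnn hsumbd
    exact hsum.tendsto_atTop_zero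
  have h2 : Tendsto (fun n : ℕ => ((n : ℝ) + 1) * d n) atTop (nhds 0) := by
    have := h1.add hd0
    simpa [add_mul, one_mul] using this
  have h3 : Tendsto (fun N : ℕ => ((N - 1 : ℕ) : ℝ) * d (N - 1) + d (N - 1))
      atTop (nhds 0) := by
    have hc : Tendsto (fun N : ℕ => N - 1) atTop atTop := tendsto_sub_atTop_nat 1
    have := h2.comp hc
    simpa [Function.comp_def, add_mul, one_mul] using this
  apply h3.congr'
  filter_upwards [eventually_ge_atTop 1] with N hN
  have hid : z N - z (N - 1) = z ((N - 1) + 1) - z (N - 1) := by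
    rw [Nat.sub_add_cancel hN]
  have hNd : ⟪z N - z (N - 1), M (z N - z (N - 1))⟫_ℝ = d (N - 1) := by rw [hid]
  rw [hNd]
  have hc : ((N - 1 : ℕ) : ℝ) = (N : ℝ) - 1 := by
    rw [Nat.cast_sub hN]; norm_num
  rw [hc]; ring
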